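/- For any nonempty string s, the number of distinct strings obtainable from s by removing a nonempty substring consisting of a single repeated character equals the length of s. -/

import Mathlib

/-- A move in StrNim: remove a nonempty contiguous block of a single repeated character. -/
def StrMove {α : Type*} (s t : List α) : Prop :=
  ∃ (x : List α) (c : α) (k : ℕ) (y : List α),
    1 ≤ k ∧ s = x ++ List.replicate k c ++ y ∧ t = x ++ y

/-- N-positions of StrNim: there is a move to a position all of whose successors are N-positions
(i.e. a move to a P-position). -/
inductive NPos {α : Type*} : List α → Prop where
  | intro {s t : List α} (h : StrMove s t) (ht : ∀ u, StrMove t u → NPos u) : NPos s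

/-- P-positions of StrNim: every successor is an N-position. -/
def PPos {α : Type*} (s : List α) : Prop := ∀ t, StrMove s t → NPos t

lemma dropWhile_head_false {α : Type*} (p : α → Bool) (l : List α) {b : α} {l' : List α}
    (h : l.dropWhile p = b :: l') : p b = false := by
  induction l with
  | nil => simp at h
  | cons a t ih =>
    rw [List.dropWhile_cons] at h
    by_cases hp : p a = true
    · exact ih (by simpa [hp] using h)
    · simp [hp] at h
      simp [← h.1, Bool.eq_false_iff.mpr hp]

lemma moves_finite {α : Type*} (s : List α) : {t | StrMove s t}.Finite := by
  apply Set.Finite.subset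
    (Set.Finite.image (fun p : ℕ × ℕ => s.take p.1 ++ s.drop p.2)
      ((Set.finite_Iic s.length).prod (Set.finite_Iic s.length)))
  rintro t ⟨x, c, k, y, hk, hs, ht⟩
  refine ⟨(x.length, x.length + k), ⟨?_, ?_⟩, ?_⟩
  · simp only [Set.mem_Iic]
    subst hs; simp
  · simp only [Set.mem_Iic]
    subst hs; simp
  · have h1 : s.take x.length = x := by
      rw [hs, List.append_assoc, List.take_left]
    have h2 : s.drop (x.length + k) = y := by
      rw [hs]
      have : (x ++ List.replicate k c).length = x.length + k := by simp
      rw [← this, List.drop_left]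
    simp [h1, h2, ht]

lemma moves_ncard {α : Type*} (s : List α) : {t | StrMove s t}.ncard = s.length := by
  classical
  induction s with
  | nil =>
    have : {t : List α | StrMove [] t} = ∅ := by
      ext t
      simp only [Set.mem_setOf_eq, Set.mem_empty_iff_false, iff_false]
      rintro ⟨x, c, k, y, hk, hs, ht⟩
      have := congrArg List.length hs
      simp at this
      omega
    simp [this]
  | cons a s' ih =>
    set p : α → Bool := fun b => decide (b = a) with hp
    set e := (a :: s').dropWhile p with he
    have hpa : p a = true := by simp [hp]
    have key : {t | StrMove (a :: s') t} = insert e ((a :: ·) '' {t | StrMove s' t}) := by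
      ext t
      simp only [Set.mem_setOf_eq, Set.mem_insert_iff, Set.mem_image]
      constructor
      · rintro ⟨x, c, k, y, hk, hs, ht⟩
        match x with
        | b :: x' =>
          right
          have hb : b = a := by
            have : a = b := by simpa using congrArg (List.head? ·) hs
            exact this.symm
          refine ⟨x' ++ y, ⟨x', c, k, y, hk, ?_, rfl⟩, ?_⟩
          · have := congrArg List.tail hs
            simpa using this
          · simp [ht, hb]
        | [] =>
          -- block removed is a prefix; c = a
          have hc : c = a := by
            obtain ⟨k', rfl⟩ : ∃ k', k = k' + 1 := ⟨k - 1, by omega⟩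
            have : a = c := by simpa [List.replicate_succ] using congrArg (List.head? ·) hs
            exact this.symm
          rw [hc] at hs
          simp only [List.nil_append] at hs ht
          cases y with
          | nil =>
            left
            rw [List.append_nil] at hs
            rw [ht, he, hs, List.dropWhile_replicate]
            simp [hpa]
          | cons b y'' =>
            by_cases hb : b = a
            · -- can re-express as a move on s'
              right
              subst hb
              refine ⟨y'', ⟨[], b, k, y'', hk, ?_, rfl⟩, by rw [ht]⟩
              simp only [List.nil_append]
              obtain ⟨k', rfl⟩ : ∃ k', k = k' + 1 := ⟨k - 1, by omega⟩
              have := congrArg List.tail hs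
              simp only [List.replicate_succ, List.cons_append, List.tail_cons] at this
              rw [this, List.replicate_succ' (n := k') (a := b)]
              simp
            · left
              rw [ht, he, hs,
                List.dropWhile_append_of_pos (by
                  intro x hx
                  simp only [List.mem_replicate] at hx
                  simp [hp, hx.2]),
                List.dropWhile_cons]
              simp [hp, hb]
      · rintro (rfl | ⟨t', ⟨x, c, k, y, hk, hs, ht⟩, rfl⟩)
        · -- dropping the maximal prefix run is a move
          set m := ((a :: s').takeWhile p).length with hm
          refine ⟨[], a, m, e, ?_, ?_, by simp⟩
          · rw [hm, List.takeWhile_cons, hpa]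
            simp
          · have hrep : (a :: s').takeWhile p = List.replicate m a := by
              rw [List.eq_replicate_iff]
              refine ⟨rfl, fun b hb => ?_⟩
              have := List.mem_takeWhile_imp hb
              simpa [hp] using this
            rw [List.nil_append, ← hrep, he, List.takeWhile_append_dropWhile]
        · exact ⟨a :: x, c, k, y, hk, by rw [hs]; simp, by rw [ht]; simp⟩
    have hnotmem : e ∉ (a :: ·) '' {t | StrMove s' t} := by
      rintro ⟨t', _, ht'⟩
      have := dropWhile_head_false p (a :: s') (he ▸ ht'.symm)
      rw [hpa] at this
      exact absurd this (by simp)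
    rw [key, Set.ncard_insert_of_notMem hnotmem ((moves_finite s').image _),
      Set.ncard_image_of_injective _ List.cons_injective, ih]
    simp

/-- For any nonempty string `s`, the number of distinct strings obtainable from `s` by one
StrNim move equals the length of `s`. -/
theorem stmt_0 {α : Type*} (s : List α) (hs : s ≠ []) :
    {t | StrMove s t}.ncard = s.length := by
  exact moves_ncard s
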